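/- arXiv:1702.01197 — 2 statements merged into one kernel-verified Lean document; each statement's English description precedes it below -/
import Mathlib

section
/- For every ε > 0 there exists a constant C(ε) such that the following holds. Let p be a prime, let Γ be a multiplicative subgroup of F_p with C(ε) ≤ |Γ| ≤ p^{6/7−ε}, and let ξ ∈ F_p be nonzero. Then for every set B ⊆ F_p one has ξ·Γ + 1 ≠ B/B, where ξ·Γ + 1 = {ξγ + 1 : γ ∈ Γ}. -/
open Pointwise

/-- `G` is (the underlying set of) a multiplicative subgroup of `F_p`, i.e. a subgroup of the
multiplicative group `F_p^* = F_p \ {0}`, regarded as a subset of `F_p`. -/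
def IsMulSubgroup {p : ℕ} (G : Finset (ZMod p)) : Prop :=
  ∃ H : Subgroup (ZMod p)ˣ,
    (G : Set (ZMod p)) = (fun u : (ZMod p)ˣ => (u : ZMod p)) '' (H : Set (ZMod p)ˣ)

/-- The ratio set `B/B = {b/b' : b, b' ∈ B, b' ≠ 0, b ≠ b'}`. -/
def ratioSet {F : Type*} [Field F] [DecidableEq F] (B : Finset F) : Finset F :=
  ((B ×ˢ B).filter fun t => t.2 ≠ 0 ∧ t.1 ≠ t.2).image fun t => t.1 / t.2

/-- The ratio set is closed under inversion away from `0`. -/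
lemma ratioSet_inv_mem {F : Type*} [Field F] [DecidableEq F] {B : Finset F} {z : F}
    (hz : z ∈ ratioSet B) (hz0 : z ≠ 0) : z⁻¹ ∈ ratioSet B := by
  simp only [ratioSet, Finset.mem_image, Finset.mem_filter, Finset.mem_product] at hz ⊢
  obtain ⟨⟨b, b'⟩, ⟨⟨hb, hb'⟩, hb'0, hne⟩, rfl⟩ := hz
  have hb0 : b ≠ 0 := by
    rintro rfl
    simp at hz0
  exact ⟨(b', b), ⟨⟨hb', hb⟩, hb0, fun h => hne h.symm⟩, (inv_div _ _).symm⟩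

lemma mulSubgroup_props {p : ℕ} [Fact p.Prime] {G : Finset (ZMod p)} (h : IsMulSubgroup G) :
    (0 : ZMod p) ∉ G ∧ (∀ x ∈ G, ∀ y ∈ G, x * y ∈ G) ∧ (∀ x ∈ G, x⁻¹ ∈ G) := by
  obtain ⟨H, hH⟩ := h
  have hmem : ∀ x : ZMod p, x ∈ G ↔ ∃ u : (ZMod p)ˣ, u ∈ H ∧ (u : ZMod p) = x := by
    intro x
    constructor
    · intro hx
      have hx' : x ∈ (G : Set (ZMod p)) := hx
      rw [hH] at hx'
      obtain ⟨u, hu, hux⟩ := hx'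
      exact ⟨u, hu, hux⟩
    · rintro ⟨u, hu, rfl⟩
      have : (u : ZMod p) ∈ (G : Set (ZMod p)) := by
        rw [hH]; exact ⟨u, hu, rfl⟩
      exact this
  refine ⟨?_, ?_, ?_⟩
  · intro h0
    obtain ⟨u, -, hu⟩ := (hmem 0).1 h0
    exact u.ne_zero hu
  · intro x hx y hy
    obtain ⟨u, hu, rfl⟩ := (hmem x).1 hx
    obtain ⟨v, hv, rfl⟩ := (hmem y).1 hy
    exact (hmem _).2 ⟨u * v, H.mul_mem hu hv, rfl⟩
  · intro x hx
    obtain ⟨u, hu, rfl⟩ := (hmem x).1 hx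
    exact (hmem _).2 ⟨u⁻¹, H.inv_mem hu, (Units.val_inv_eq_inv_val u)⟩

lemma sum_pow_eq_zero {p : ℕ} [Fact p.Prime] {G : Finset (ZMod p)}
    (h0 : (0 : ZMod p) ∉ G) (hmul : ∀ x ∈ G, ∀ y ∈ G, x * y ∈ G)
    {g : ZMod p} (hg : g ∈ G) {j : ℕ} (hgj : g ^ j ≠ 1) :
    ∑ x ∈ G, x ^ j = 0 := by
  have hg0 : g ≠ 0 := fun h => h0 (h ▸ hg)
  have hinj : Function.Injective (fun x : ZMod p => g * x) := mul_right_injective₀ hg0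
  have himg : G.image (fun x => g * x) = G := by
    apply Finset.eq_of_subset_of_card_le
    · intro y hy
      obtain ⟨x, hx, rfl⟩ := Finset.mem_image.1 hy
      exact hmul g hg x hx
    · rw [Finset.card_image_of_injective _ hinj]
  have h1 : ∑ x ∈ G, x ^ j = ∑ x ∈ G, (g * x) ^ j := by
    conv_lhs => rw [← himg]
    rw [Finset.sum_image (fun a _ b _ hab => hinj hab)]
  have h2 : ∑ x ∈ G, (g * x) ^ j = g ^ j * ∑ x ∈ G, x ^ j := by
    rw [Finset.mul_sum]
    exact Finset.sum_congr rfl fun x _ => mul_pow g x j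
  have h3 : (g ^ j - 1) * ∑ x ∈ G, x ^ j = 0 := by
    have := h1.trans h2
    linear_combination -this
  rcases mul_eq_zero.1 h3 with h | h
  · exact absurd (sub_eq_zero.1 h) hgj
  · exact h

/-- For every `ε > 0` there is `C(ε)` such that for every prime `p`, every multiplicative
subgroup `Γ ⊆ F_p` with `C(ε) ≤ |Γ| ≤ p^(6/7-ε)` and every `ξ ≠ 0`, for every set `B ⊆ F_p`
one has `ξ·Γ + 1 ≠ B/B`. -/
theorem statement1 :
    ∀ ε : ℝ, 0 < ε → ∃ C : ℝ, ∀ (p : ℕ) [Fact p.Prime],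
      ∀ G : Finset (ZMod p), IsMulSubgroup G →
        C ≤ (G.card : ℝ) → (G.card : ℝ) ≤ (p : ℝ) ^ ((6 : ℝ) / 7 - ε) →
        ∀ ξ : ZMod p, ξ ≠ 0 →
        ∀ B : Finset (ZMod p), (G.image fun g => ξ * g + 1) ≠ ratioSet B := by
  intro ε hε
  refine ⟨129, ?_⟩
  intro p _ G hG hC hup ξ hξ B heq
  obtain ⟨h0G, hmulG, hinvG⟩ := mulSubgroup_props hG
  have hk3 : 129 ≤ G.card := by exact_mod_cast hC
  have hkpos : 0 < G.card := by omega
  have hp2 : 2 ≤ p := (Fact.out : p.Prime).two_le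
  have hkp : G.card < p := by
    have hsub : G ⊆ Finset.univ.erase (0 : ZMod p) := fun x hx =>
      Finset.mem_erase.2 ⟨fun h => h0G (h ▸ hx), Finset.mem_univ x⟩
    have : G.card ≤ p - 1 := by
      calc G.card ≤ (Finset.univ.erase (0 : ZMod p)).card := Finset.card_le_card hsub
        _ = p - 1 := by
            rw [Finset.card_erase_of_mem (Finset.mem_univ _), Finset.card_univ, ZMod.card]
    omega
  -- Step 1: closure of G under δ ↦ -ξ - δ (away from -ξ)
  have hstep : ∀ δ ∈ G, δ ≠ -ξ → -ξ - δ ∈ G := by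
    intro δ hδ hδξ
    have hδ0 : δ ≠ 0 := fun h => h0G (h ▸ hδ)
    have hξδ : ξ + δ ≠ 0 := fun h => hδξ (by linear_combination h)
    have hγ : δ⁻¹ ∈ G := hinvG δ hδ
    have hs : ξ * δ⁻¹ + 1 ∈ ratioSet B := by
      rw [← heq]; exact Finset.mem_image.2 ⟨δ⁻¹, hγ, rfl⟩
    have hs0 : ξ * δ⁻¹ + 1 ≠ 0 := by
      intro h
      apply hξδ
      field_simp at h
      linear_combination h
    have hsi := ratioSet_inv_mem hs hs0
    rw [← heq] at hsi
    obtain ⟨γ', hγ', hval⟩ := Finset.mem_image.1 hsi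
    have hγ'0 : γ' ≠ 0 := fun h => h0G (h ▸ hγ')
    have hmul1 : (ξ * δ⁻¹ + 1) * (ξ * γ' + 1) = 1 := by
      rw [hval]; exact mul_inv_cancel₀ hs0
    have hone : γ' * (-(ξ + δ)) = 1 := by
      have h' : (ξ + δ) * (ξ * γ' + 1) = δ := by
        have := hmul1
        field_simp at this
        linear_combination this
      have hi : ξ * (γ' * (-(ξ + δ))) = ξ * 1 := by linear_combination -h'
      exact mul_left_cancel₀ hξ hi
    have : γ'⁻¹ = -(ξ + δ) := inv_eq_of_mul_eq_one_right hone
    have hmem : γ'⁻¹ ∈ G := hinvG γ' hγ'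
    rw [this] at hmem
    have : -ξ - δ = -(ξ + δ) := by ring
    rwa [this]
  -- power sums vanish
  have hS1 : ∑ x ∈ G, x = 0 := by
    have hex : ∃ g ∈ G, g ≠ 1 := by
      by_contra hcon
      push_neg at hcon
      have : G ⊆ {1} := fun x hx => Finset.mem_singleton.2 (hcon x hx)
      have := Finset.card_le_card this
      simp at this
      omega
    obtain ⟨g, hg, hg1⟩ := hex
    have := sum_pow_eq_zero h0G hmulG hg (j := 1) (by simpa using hg1)
    simpa using this
  have hS2 : ∑ x ∈ G, x ^ 2 = 0 := by
    have hex : ∃ g ∈ G, g ^ 2 ≠ 1 := by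
      by_contra hcon
      push_neg at hcon
      have : G ⊆ {1, -1} := by
        intro x hx
        have hx2 : (x - 1) * (x + 1) = 0 := by linear_combination hcon x hx
        rcases mul_eq_zero.1 hx2 with h | h
        · simp [sub_eq_zero.1 h]
        · have : x = -1 := by linear_combination h
          simp [this]
      have := Finset.card_le_card this
      have h2 : ({1, -1} : Finset (ZMod p)).card ≤ 2 := Finset.card_insert_le _ _ |>.trans (by simp)
      omega
    obtain ⟨g, hg, hg2⟩ := hex
    exact sum_pow_eq_zero h0G hmulG hg hg2
  set t : ZMod p := -ξ with ht
  have ht0 : t ≠ 0 := by simpa [ht] using hξ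
  have hKne : ((G.card : ℕ) : ZMod p) ≠ 0 := by
    intro h
    have := (ZMod.natCast_eq_zero_iff _ _).1 h
    have := Nat.le_of_dvd hkpos this
    omega
  by_cases hT : t ∈ G
  · -- t ∈ G : the reflection misses exactly one element m of G
    set G' := G.erase t with hG'
    have hG'card : G'.card = G.card - 1 := Finset.card_erase_of_mem hT
    have hinj : Function.Injective (fun δ : ZMod p => t - δ) := by
      intro a b h
      simpa [sub_right_inj] using h
    set I := G'.image (fun δ => t - δ) with hI
    have hIsub : I ⊆ G := by
      intro y hy
      obtain ⟨δ, hδ, rfl⟩ := Finset.mem_image.1 hy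
      obtain ⟨hne, hδG⟩ := Finset.mem_erase.1 hδ
      have := hstep δ hδG (by simpa [ht] using hne)
      simpa [ht] using this
    have hIcard : I.card = G.card - 1 := by
      rw [hI, Finset.card_image_of_injective _ hinj, hG'card]
    have hsd : (G \ I).card = 1 := by
      rw [Finset.card_sdiff_of_subset hIsub, hIcard]
      omega
    obtain ⟨m, hm⟩ := Finset.card_eq_one.1 hsd
    have hmG : m ∈ G := by
      have : m ∈ G \ I := hm ▸ Finset.mem_singleton_self m
      exact (Finset.mem_sdiff.1 this).1
    have hmI : m ∉ I := by
      have : m ∈ G \ I := hm ▸ Finset.mem_singleton_self m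
      exact (Finset.mem_sdiff.1 this).2
    have hIeq : I = G.erase m := by
      apply Finset.eq_of_subset_of_card_le
      · intro y hy
        exact Finset.mem_erase.2 ⟨fun h => hmI (h ▸ hy), hIsub hy⟩
      · rw [Finset.card_erase_of_mem hmG, hIcard]
    set K : ZMod p := ((G.card : ℕ) : ZMod p) with hK
    -- first moment
    have hsum1 : ∑ δ ∈ G', (t - δ) = ∑ y ∈ I, y := by
      rw [hI, Finset.sum_image (fun a _ b _ hab => hinj hab)]
    have hG'sum : ∑ δ ∈ G', δ = -t := by
      have := Finset.sum_erase_add G (fun x => x) hT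
      rw [hS1] at this
      linear_combination this
    have hG'sum2 : ∑ δ ∈ G', δ ^ 2 = -t ^ 2 := by
      have := Finset.sum_erase_add G (fun x => x ^ 2) hT
      rw [hS2] at this
      linear_combination this
    have hIsum : ∑ y ∈ I, y = -m := by
      rw [hIeq]
      have := Finset.sum_erase_add G (fun x => x) hmG
      rw [hS1] at this
      linear_combination this
    have hIsum2 : ∑ y ∈ I, y ^ 2 = -m ^ 2 := by
      rw [hIeq]
      have := Finset.sum_erase_add G (fun x => x ^ 2) hmG
      rw [hS2] at this
      linear_combination this
    have hcardG' : ((G'.card : ℕ) : ZMod p) = K - 1 := by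
      rw [hG'card, hK]
      have : (G.card - 1 : ℕ) = G.card - 1 := rfl
      push_cast [Nat.cast_sub hkpos]
      ring
    have hLHS1 : ∑ δ ∈ G', (t - δ) = (K - 1) * t + t := by
      rw [Finset.sum_sub_distrib, Finset.sum_const, hG'sum, nsmul_eq_mul, hcardG']
      ring
    have hm_eq : m = -(K * t) := by
      have := hsum1
      rw [hLHS1, hIsum] at this
      linear_combination this
    -- second moment
    have hsum2 : ∑ δ ∈ G', (t - δ) ^ 2 = ∑ y ∈ I, y ^ 2 := by
      rw [hI, Finset.sum_image (fun a _ b _ hab => hinj hab)]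
    have hLHS2 : ∑ δ ∈ G', (t - δ) ^ 2 = (K - 1) * t ^ 2 + 2 * t ^ 2 - t ^ 2 := by
      have hexp : ∀ δ : ZMod p, (t - δ) ^ 2 = t ^ 2 - 2 * t * δ + δ ^ 2 := fun δ => by ring
      calc ∑ δ ∈ G', (t - δ) ^ 2 = ∑ δ ∈ G', (t ^ 2 - 2 * t * δ + δ ^ 2) :=
            Finset.sum_congr rfl fun δ _ => hexp δ
        _ = (G'.card : ℕ) • t ^ 2 - 2 * t * (∑ δ ∈ G', δ) + ∑ δ ∈ G', δ ^ 2 := by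
            rw [Finset.sum_add_distrib, Finset.sum_sub_distrib, Finset.sum_const,
              Finset.mul_sum]
        _ = (K - 1) * t ^ 2 + 2 * t ^ 2 - t ^ 2 := by
            rw [hG'sum, hG'sum2, nsmul_eq_mul, hcardG']
            ring
    have hfinal : K * t ^ 2 * (1 + K) = 0 := by
      have := hsum2
      rw [hLHS2, hIsum2, hm_eq] at this
      linear_combination this
    have h1K : (1 : ZMod p) + K = 0 := by
      rcases mul_eq_zero.1 hfinal with h | h
      · rcases mul_eq_zero.1 h with h' | h'
        · exact absurd h' hKne
        · exact absurd (sq_eq_zero_iff.1 h') ht0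
      · exact h
    have hKsucc : ((G.card + 1 : ℕ) : ZMod p) = 0 := by
      push_cast
      linear_combination h1K
    have hdvd : p ∣ G.card + 1 := (ZMod.natCast_eq_zero_iff _ _).1 hKsucc
    have hple : G.card + 1 ≤ p := by omega
    have hpeq : p = G.card + 1 := by
      have := Nat.le_of_dvd (by omega) hdvd
      omega
    -- numeric contradiction : p - 1 ≤ p^(6/7-ε) impossible for p ≥ 130
    have hp130 : (130 : ℝ) ≤ (p : ℝ) := by
      have : 130 ≤ p := by omega
      exact_mod_cast this
    have hppos : (0 : ℝ) < (p : ℝ) := by linarith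
    have h1p : (1 : ℝ) ≤ (p : ℝ) := by linarith
    have hmono : (p : ℝ) ^ ((6 : ℝ) / 7 - ε) ≤ (p : ℝ) ^ ((6 : ℝ) / 7) :=
      Real.rpow_le_rpow_of_exponent_le h1p (by linarith)
    have h2le : (2 : ℝ) ≤ (p : ℝ) ^ ((1 : ℝ) / 7) := by
      have h128 : ((128 : ℝ)) ^ ((1 : ℝ) / 7) ≤ (p : ℝ) ^ ((1 : ℝ) / 7) :=
        Real.rpow_le_rpow (by norm_num) (by linarith) (by norm_num)
      have : ((128 : ℝ)) ^ ((1 : ℝ) / 7) = 2 := by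
        have : (128 : ℝ) = 2 ^ (7 : ℕ) := by norm_num
        rw [this, ← Real.rpow_natCast 2 7, ← Real.rpow_mul (by norm_num)]
        norm_num
      linarith [h128, this.ge, this.le]
    have hsplit : (p : ℝ) ^ ((6 : ℝ) / 7) * (p : ℝ) ^ ((1 : ℝ) / 7) = (p : ℝ) := by
      rw [← Real.rpow_add hppos]
      norm_num
    have hpow_pos : (0 : ℝ) < (p : ℝ) ^ ((6 : ℝ) / 7) := Real.rpow_pos_of_pos hppos _
    have hhalf : (p : ℝ) ^ ((6 : ℝ) / 7) * 2 ≤ (p : ℝ) := by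
      calc (p : ℝ) ^ ((6 : ℝ) / 7) * 2 ≤ (p : ℝ) ^ ((6 : ℝ) / 7) * (p : ℝ) ^ ((1 : ℝ) / 7) := by
            nlinarith
        _ = (p : ℝ) := hsplit
    have hcard_real : (G.card : ℝ) = (p : ℝ) - 1 := by
      have hpr : (p : ℝ) = (G.card : ℝ) + 1 := by exact_mod_cast hpeq
      linarith
    nlinarith [hup, hmono, hhalf, hcard_real]
  · -- t ∉ G : the reflection is a bijection of G
    have hinj : Function.Injective (fun δ : ZMod p => t - δ) := by
      intro a b h
      simpa [sub_right_inj] using h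
    have himg : G.image (fun δ => t - δ) = G := by
      apply Finset.eq_of_subset_of_card_le
      · intro y hy
        obtain ⟨δ, hδ, rfl⟩ := Finset.mem_image.1 hy
        have hne : δ ≠ -ξ := fun h => hT (by rw [ht, ← h]; exact hδ)
        have := hstep δ hδ hne
        simpa [ht] using this
      · rw [Finset.card_image_of_injective _ hinj]
    have hsum : ∑ δ ∈ G, (t - δ) = ∑ x ∈ G, x := by
      conv_rhs => rw [← himg]
      rw [Finset.sum_image (fun a _ b _ hab => hinj hab)]
    have hLHS : ∑ δ ∈ G, (t - δ) = ((G.card : ℕ) : ZMod p) * t := by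
      rw [Finset.sum_sub_distrib, Finset.sum_const, hS1, nsmul_eq_mul]
      ring
    rw [hLHS, hS1] at hsum
    rcases mul_eq_zero.1 hsum with h | h
    · exact hKne h
    · exact ht0 h
end

section
/- Let p be a prime, Γ a multiplicative subgroup of F_p, and η₁, η₂ ∈ F_p nonzero. Then |Γ| · |{ (γ₁, γ₂, γ) ∈ Γ × Γ × Γ : 1 − η₁γ₁ = η₂γ·(1 − η₁γ₂) }| ≤ E⁺(Γ). -/
open Pointwise

/-- The additive energy `E⁺(A)`: the number of quadruples `(a₁,a₂,a₃,a₄) ∈ A⁴`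
with `a₁ + a₂ = a₃ + a₄`. -/
def addEnergyPlus {p : ℕ} (A : Finset (ZMod p)) : ℕ :=
  (((A ×ˢ A) ×ˢ A ×ˢ A).filter fun t => t.1.1 + t.1.2 = t.2.1 + t.2.2).card

/-- Counting solutions of `u x = v y` by fibers. -/
lemma cnt_aux {α β γ : Type*} [DecidableEq γ] [Fintype γ]
    (X : Finset α) (Y : Finset β) (u : α → γ) (v : β → γ) :
    ((X ×ˢ Y).filter fun t => u t.1 = v t.2).card
      = ∑ s : γ, (X.filter fun x => u x = s).card * (Y.filter fun y => v y = s).card := by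
  rw [Finset.card_eq_sum_card_fiberwise
    (f := fun t : α × β => u t.1) (t := Finset.univ) (fun x _ => Finset.mem_univ _)]
  refine Finset.sum_congr rfl fun s _ => ?_
  rw [← Finset.card_product]
  congr 1
  ext ⟨x, y⟩
  simp only [Finset.filter_filter, Finset.mem_filter, Finset.mem_product]
  constructor
  · rintro ⟨⟨hx, hy⟩, huv, hus⟩
    exact ⟨⟨hx, hus⟩, hy, huv ▸ hus⟩
  · rintro ⟨⟨hx, hus⟩, hy, hvs⟩
    exact ⟨⟨hx, hy⟩, by rw [hus, hvs], hus⟩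

/-- Cauchy–Schwarz specialization. -/
lemma cs_aux {ι : Type*} [Fintype ι] (f g : ι → ℕ)
    (h : ∑ s, g s ^ 2 = ∑ s, f s ^ 2) : ∑ s, f s * g s ≤ ∑ s, f s ^ 2 := by
  have h2 := Finset.sum_mul_sq_le_sq_mul_sq Finset.univ f g
  rw [h, ← sq] at h2
  exact le_of_pow_le_pow_left₀ two_ne_zero (Nat.zero_le _) h2

lemma sum_sq_comp_aux {p : ℕ} [Fact p.Prime] (f : ZMod p → ℕ) {c : ZMod p} (hc : c ≠ 0) :
    ∑ s : ZMod p, f (c * s) ^ 2 = ∑ s : ZMod p, f s ^ 2 :=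
  Fintype.sum_bijective (c * ·) (mulLeft_bijective₀ c hc) _ _ (fun _ => rfl)

/-- For a prime `p`, a multiplicative subgroup `Γ ⊆ F_p` and nonzero `η₁, η₂ ∈ F_p` one has
`|Γ| · |{(γ₁,γ₂,γ) ∈ Γ³ : 1 - η₁γ₁ = η₂γ(1 - η₁γ₂)}| ≤ E⁺(Γ)`. -/
theorem statement14 :
    ∀ (p : ℕ), p.Prime → ∀ G : Finset (ZMod p), IsMulSubgroup G →
      ∀ η₁ η₂ : ZMod p, η₁ ≠ 0 → η₂ ≠ 0 →
      G.card * ((G ×ˢ G ×ˢ G).filter fun t =>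
          1 - η₁ * t.1 = η₂ * t.2.2 * (1 - η₁ * t.2.1)).card ≤ addEnergyPlus G := by
  intro p hp G hG η₁ η₂ h1 h2
  haveI : Fact p.Prime := ⟨hp⟩
  obtain ⟨H, hH⟩ := hG
  -- basic facts about G
  have hne : ∀ x ∈ G, x ≠ 0 := by
    intro x hx
    have : x ∈ (G : Set (ZMod p)) := hx
    rw [hH] at this
    obtain ⟨u, _, rfl⟩ := this
    exact u.ne_zero
  have hmul : ∀ x ∈ G, ∀ y ∈ G, x * y ∈ G := by
    intro x hx y hy
    have hx' : x ∈ (G : Set (ZMod p)) := hx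
    have hy' : y ∈ (G : Set (ZMod p)) := hy
    rw [hH] at hx' hy'
    obtain ⟨u, hu, rfl⟩ := hx'
    obtain ⟨v, hv, rfl⟩ := hy'
    have : ((u * v : (ZMod p)ˣ) : ZMod p) ∈ (G : Set (ZMod p)) := by
      rw [hH]; exact ⟨u * v, H.mul_mem hu hv, rfl⟩
    simpa using this
  -- the solution set
  set S : Finset (ZMod p × ZMod p × ZMod p) :=
    (G ×ˢ G ×ˢ G).filter fun t => 1 - η₁ * t.1 = η₂ * t.2.2 * (1 - η₁ * t.2.1) with hS
  -- counting functions
  set f : ZMod p → ℕ := fun s => ((G ×ˢ G).filter fun x : ZMod p × ZMod p =>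
    x.1 - η₂ * x.2 = s).card with hf
  set d : ZMod p → ℕ := fun s => ((G ×ˢ G).filter fun x : ZMod p × ZMod p =>
    x.1 - x.2 = s).card with hd
  -- Step 1: injection from G ×ˢ S into the set T
  set T : Finset ((ZMod p × ZMod p) × ZMod p × ZMod p) :=
    ((G ×ˢ G) ×ˢ (G ×ˢ G)).filter fun t =>
      t.1.1 - η₂ * t.1.2 = η₁ * t.2.1 - η₁ * η₂ * t.2.2 with hT
  have step1 : G.card * S.card ≤ T.card := by
    rw [← Finset.card_product]
    apply Finset.card_le_card_of_injOn
      (fun q => ((q.1, q.2.2.2 * q.1), (q.2.1 * q.1, q.2.2.2 * q.2.2.1 * q.1)))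
    · rintro ⟨γ₀, γ₁, γ₂, γ⟩ hq
      rw [Finset.mem_coe, Finset.mem_product] at hq
      obtain ⟨hγ₀, hq⟩ := hq
      rw [hS, Finset.mem_filter, Finset.mem_product, Finset.mem_product] at hq
      obtain ⟨⟨hγ₁, hγ₂, hγ⟩, heq⟩ := hq
      rw [Finset.mem_coe, hT, Finset.mem_filter, Finset.mem_product, Finset.mem_product, Finset.mem_product]
      refine ⟨⟨⟨hγ₀, hmul _ hγ _ hγ₀⟩, hmul _ hγ₁ _ hγ₀, hmul _ (hmul _ hγ _ hγ₂) _ hγ₀⟩, ?_⟩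
      dsimp only
      linear_combination γ₀ * heq
    · rintro ⟨γ₀, γ₁, γ₂, γ⟩ hq ⟨δ₀, δ₁, δ₂, δ⟩ hq' heq
      simp only [Finset.coe_product, Set.mem_prod, Finset.mem_coe] at hq hq'
      obtain ⟨hγ₀, hqS⟩ := hq
      obtain ⟨hδ₀, hqS'⟩ := hq'
      have hγ₀0 : γ₀ ≠ 0 := hne _ hγ₀
      simp only [Prod.mk.injEq] at heq
      obtain ⟨⟨e0, e1⟩, e2, e3⟩ := heq
      subst e0
      have hγ : γ = δ := mul_right_cancel₀ hγ₀0 e1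
      have hγ₁' : γ₁ = δ₁ := mul_right_cancel₀ hγ₀0 e2
      have hγne : γ ≠ 0 := by
        rw [Finset.mem_filter, Finset.mem_product, Finset.mem_product] at hqS
        exact hne _ hqS.1.2.2
      have hγ₂' : γ₂ = δ₂ := by
        have := mul_right_cancel₀ hγ₀0 e3
        rw [hγ] at this
        exact mul_left_cancel₀ (hγ ▸ hγne) this
      simp [hγ, hγ₁', hγ₂']
  -- Step 2: T.card as a sum
  have step2 : T.card = ∑ s : ZMod p, f s * f (η₁⁻¹ * s) := by
    rw [hT, cnt_aux (G ×ˢ G) (G ×ˢ G) (fun x => x.1 - η₂ * x.2)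
      (fun y => η₁ * y.1 - η₁ * η₂ * y.2)]
    refine Finset.sum_congr rfl fun s _ => ?_
    simp only [hf]
    congr 2
    ext ⟨a, b⟩
    simp only [Finset.mem_filter, Finset.mem_product, and_congr_right_iff]
    intro h
    constructor
    · intro he
      field_simp
      linear_combination he
    · intro he
      field_simp at he
      linear_combination he
  -- Step 3: Cauchy–Schwarz
  have step3 : ∑ s : ZMod p, f s * f (η₁⁻¹ * s) ≤ ∑ s : ZMod p, f s ^ 2 := by
    apply cs_aux
    have := sum_sq_comp_aux (fun s => f (η₁⁻¹ * s)) (c := η₁) h1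
    simp only [inv_mul_cancel_left₀ h1] at this
    exact this.symm
  -- Step 4: rewrite ∑ f² as a sum over difference counts
  have step4 : ∑ s : ZMod p, f s ^ 2 = ∑ t : ZMod p, d t * d (η₂⁻¹ * t) := by
    have e1 : ∑ s : ZMod p, f s ^ 2
        = (((G ×ˢ G) ×ˢ (G ×ˢ G)).filter fun t : (ZMod p × ZMod p) × ZMod p × ZMod p =>
            t.1.1 - η₂ * t.1.2 = t.2.1 - η₂ * t.2.2).card := by
      rw [cnt_aux (G ×ˢ G) (G ×ˢ G) (fun x => x.1 - η₂ * x.2) (fun y => y.1 - η₂ * y.2)]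
      exact Finset.sum_congr rfl fun s _ => by simp [hf, pow_two]
    have e2 : (((G ×ˢ G) ×ˢ (G ×ˢ G)).filter fun t : (ZMod p × ZMod p) × ZMod p × ZMod p =>
            t.1.1 - η₂ * t.1.2 = t.2.1 - η₂ * t.2.2).card
        = (((G ×ˢ G) ×ˢ (G ×ˢ G)).filter fun t : (ZMod p × ZMod p) × ZMod p × ZMod p =>
            t.1.1 - t.1.2 = η₂ * t.2.1 - η₂ * t.2.2).card := by
      apply Finset.card_nbij' (fun t => ((t.1.1, t.2.1), (t.1.2, t.2.2)))
        (fun t => ((t.1.1, t.2.1), (t.1.2, t.2.2)))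
      · rintro ⟨⟨a, c⟩, ⟨a', c'⟩⟩ ht
        simp only [Finset.mem_coe, Finset.mem_filter, Finset.mem_product] at ht ⊢
        obtain ⟨⟨⟨ha, hc⟩, ha', hc'⟩, he⟩ := ht
        exact ⟨⟨⟨ha, ha'⟩, hc, hc'⟩, by linear_combination he⟩
      · rintro ⟨⟨a, a'⟩, ⟨c, c'⟩⟩ ht
        simp only [Finset.mem_coe, Finset.mem_filter, Finset.mem_product] at ht ⊢
        obtain ⟨⟨⟨ha, ha'⟩, hc, hc'⟩, he⟩ := ht
        exact ⟨⟨⟨ha, hc⟩, ha', hc'⟩, by linear_combination he⟩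
      · rintro ⟨⟨a, c⟩, ⟨a', c'⟩⟩ _; rfl
      · rintro ⟨⟨a, a'⟩, ⟨c, c'⟩⟩ _; rfl
    rw [e1, e2, cnt_aux (G ×ˢ G) (G ×ˢ G) (fun x => x.1 - x.2)
      (fun y => η₂ * y.1 - η₂ * y.2)]
    refine Finset.sum_congr rfl fun s _ => ?_
    simp only [hd]
    congr 2
    ext ⟨a, b⟩
    simp only [Finset.mem_filter, Finset.mem_product, and_congr_right_iff]
    intro h
    constructor
    · intro he
      field_simp
      linear_combination he
    · intro he
      field_simp at he
      linear_combination he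
  -- Step 5: Cauchy–Schwarz again
  have step5 : ∑ t : ZMod p, d t * d (η₂⁻¹ * t) ≤ ∑ t : ZMod p, d t ^ 2 := by
    apply cs_aux
    have := sum_sq_comp_aux (fun s => d (η₂⁻¹ * s)) (c := η₂) h2
    simp only [inv_mul_cancel_left₀ h2] at this
    exact this.symm
  -- Step 6: identify ∑ d² with the additive energy
  have step6 : ∑ t : ZMod p, d t ^ 2 = addEnergyPlus G := by
    have e1 : ∑ t : ZMod p, d t ^ 2
        = (((G ×ˢ G) ×ˢ (G ×ˢ G)).filter fun t : (ZMod p × ZMod p) × ZMod p × ZMod p =>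
            t.1.1 - t.1.2 = t.2.1 - t.2.2).card := by
      rw [cnt_aux (G ×ˢ G) (G ×ˢ G) (fun x => x.1 - x.2) (fun y => y.1 - y.2)]
      exact Finset.sum_congr rfl fun s _ => by simp [hd, pow_two]
    rw [e1, addEnergyPlus]
    apply Finset.card_nbij' (fun t => ((t.1.1, t.2.2), (t.1.2, t.2.1)))
      (fun t => ((t.1.1, t.2.1), (t.2.2, t.1.2)))
    · rintro ⟨⟨x, y⟩, ⟨z, w⟩⟩ ht
      simp only [Finset.mem_coe, Finset.mem_filter, Finset.mem_product] at ht ⊢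
      obtain ⟨⟨⟨hx, hy⟩, hz, hw⟩, he⟩ := ht
      exact ⟨⟨⟨hx, hw⟩, hy, hz⟩, by linear_combination he⟩
    · rintro ⟨⟨a, b⟩, ⟨c, e⟩⟩ ht
      simp only [Finset.mem_coe, Finset.mem_filter, Finset.mem_product] at ht ⊢
      obtain ⟨⟨⟨ha, hb⟩, hc, hee⟩, he⟩ := ht
      exact ⟨⟨⟨ha, hc⟩, hee, hb⟩, by linear_combination he⟩
    · rintro ⟨⟨x, y⟩, ⟨z, w⟩⟩ _; rfl
    · rintro ⟨⟨a, b⟩, ⟨c, e⟩⟩ _; rfl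
  calc G.card * S.card ≤ T.card := step1
    _ = ∑ s : ZMod p, f s * f (η₁⁻¹ * s) := step2
    _ ≤ ∑ s : ZMod p, f s ^ 2 := step3
    _ = ∑ t : ZMod p, d t * d (η₂⁻¹ * t) := step4
    _ ≤ ∑ t : ZMod p, d t ^ 2 := step5
    _ = addEnergyPlus G := step6
end
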